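/- With the notation of piecewise linear interpolation at knots S_N on a compact F ⊆ [0,1], for any continuous f on F and any t ∈ F one has |π_N(f)(t) − f(t)| ≤ M_f(δ_N) + Ψ_f(δ_N), where M_f is the truncated modulus of continuity, Ψ_f(δ) = sup_{s≥1} M_f(sδ)/s, and δ_N = sup_{t∈F} min(|t−t⁻_N|, |t−t⁺_N|). In particular ‖π_N(f) − f‖_∞ ≤ 2Ψ_f(δ_N). -/
import Mathlib


open Set Classical

/-- Piecewise linear interpolation of `f` at the knots in `S`. -/
noncomputable def piecewiseLin (S : Set ℝ) (f : ℝ → ℝ) (t : ℝ) : ℝ :=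
  if t ∈ S then f t
  else
    f (sSup (S ∩ Iic t)) *
        ((sInf (S ∩ Ici t) - t) / (sInf (S ∩ Ici t) - sSup (S ∩ Iic t)))
      + f (sInf (S ∩ Ici t)) *
        ((t - sSup (S ∩ Iic t)) / (sInf (S ∩ Ici t) - sSup (S ∩ Iic t)))

set_option maxHeartbeats 1600000 in
theorem stmt_11 (F : Set ℝ) (hFcomp : IsCompact F) (hFsub : F ⊆ Icc (0:ℝ) 1)
    (S : Set ℝ) (hSfin : S.Finite) (hSsub : S ⊆ F)
    (h0 : (0:ℝ) ∈ S) (h1 : (1:ℝ) ∈ S)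
    (f : ℝ → ℝ) (hf : ContinuousOn f F)
    (M : ℝ → ℝ)
    (hMle : ∀ δ : ℝ, δ ≤ 1 →
      M δ = sSup {y : ℝ | ∃ s ∈ F, ∃ u ∈ F, |s - u| ≤ δ ∧ y = |f s - f u|})
    (hMge : ∀ δ : ℝ, 1 ≤ δ → M δ = M 1)
    (Ψ : ℝ → ℝ)
    (hΨ : ∀ δ : ℝ, Ψ δ = ⨆ s : {s : ℝ // 1 ≤ s}, M ((s : ℝ) * δ) / (s : ℝ))
    (δN : ℝ)
    (hδN : δN = ⨆ t : F,
      min |(t : ℝ) - sSup (S ∩ Iic (t : ℝ))| |(t : ℝ) - sInf (S ∩ Ici (t : ℝ))|)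
    (t : ℝ) (ht : t ∈ F) :
    |piecewiseLin S f t - f t| ≤ M δN + Ψ δN ∧
    |piecewiseLin S f t - f t| ≤ 2 * Ψ δN := by
  classical
  have hF0 : (0:ℝ) ∈ F := hSsub h0
  have hF1 : (1:ℝ) ∈ F := hSsub h1
  obtain ⟨C, hC⟩ := hFcomp.exists_bound_of_continuousOn hf
  set A : ℝ → Set ℝ :=
    fun δ => {y : ℝ | ∃ s ∈ F, ∃ u ∈ F, |s - u| ≤ δ ∧ y = |f s - f u|} with hA
  have hAbdd : ∀ δ, BddAbove (A δ) := by
    intro δ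
    refine ⟨2 * C, ?_⟩
    rintro y ⟨s, hs, u, hu, -, rfl⟩
    have h1 := hC s hs
    have h2 := hC u hu
    calc |f s - f u| = ‖f s - f u‖ := (Real.norm_eq_abs _).symm
      _ ≤ ‖f s‖ + ‖f u‖ := norm_sub_le _ _
      _ ≤ 2 * C := by linarith
  have hAne : ∀ δ, 0 ≤ δ → (A δ).Nonempty := by
    intro δ hδ
    exact ⟨|f 0 - f 0|, 0, hF0, 0, hF0, by simpa using hδ, rfl⟩
  have hmem_le : ∀ δ, 0 ≤ δ → δ ≤ 1 → ∀ s ∈ F, ∀ u ∈ F, |s - u| ≤ δ →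
      |f s - f u| ≤ M δ := by
    intro δ h0δ hδ1 s hs u hu hsu
    rw [hMle δ hδ1]
    exact le_csSup (hAbdd δ) ⟨s, hs, u, hu, hsu, rfl⟩
  have hMnonneg : ∀ δ, 0 ≤ δ → δ ≤ 1 → 0 ≤ M δ := by
    intro δ h0δ hδ1
    have := hmem_le δ h0δ hδ1 0 hF0 0 hF0 (by simpa using h0δ)
    simpa using this
  have hMmono : ∀ a b, 0 ≤ a → a ≤ b → b ≤ 1 → M a ≤ M b := by
    intro a b ha hab hb1
    rw [hMle a (hab.trans hb1), hMle b hb1]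
    refine csSup_le_csSup (hAbdd b) (hAne a ha) ?_
    rintro y ⟨s, hs, u, hu, hsu, rfl⟩
    exact ⟨s, hs, u, hu, hsu.trans hab, rfl⟩
  have hM1 : ∀ δ, 0 ≤ δ → M δ ≤ M 1 := by
    intro δ h0δ
    rcases le_or_gt δ 1 with h | h
    · exact hMmono δ 1 h0δ h le_rfl
    · exact (hMge δ h.le).le
  have hM1nonneg : 0 ≤ M 1 := hMnonneg 1 zero_le_one le_rfl
  -- facts about knots
  have hLmem : ∀ x ∈ F, sSup (S ∩ Iic x) ∈ S ∩ Iic x := by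
    intro x hx
    have hne : (S ∩ Iic x).Nonempty := ⟨0, h0, (hFsub hx).1⟩
    exact hne.csSup_mem (hSfin.inter_of_left _)
  have hRmem : ∀ x ∈ F, sInf (S ∩ Ici x) ∈ S ∩ Ici x := by
    intro x hx
    have hne : (S ∩ Ici x).Nonempty := ⟨1, h1, (hFsub hx).2⟩
    exact hne.csInf_mem (hSfin.inter_of_left _)
  have habs1 : ∀ x y : ℝ, x ∈ Icc (0:ℝ) 1 → y ∈ Icc (0:ℝ) 1 → |x - y| ≤ 1 := by
    intro x y hx hy
    rw [abs_sub_le_iff]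
    constructor <;> [linarith [hx.2, hy.1]; linarith [hy.2, hx.1]]
  have hfam_le : ∀ x : F,
      min |(x : ℝ) - sSup (S ∩ Iic (x : ℝ))| |(x : ℝ) - sInf (S ∩ Ici (x : ℝ))| ≤ 1 := by
    intro x
    have hL := (hLmem x x.2).1
    exact le_trans (min_le_left _ _)
      (habs1 _ _ (hFsub x.2) (hFsub (hSsub hL)))
  haveI : Nonempty F := ⟨⟨t, ht⟩⟩
  have hfam_bdd : BddAbove (Set.range fun x : F =>
      min |(x : ℝ) - sSup (S ∩ Iic (x : ℝ))| |(x : ℝ) - sInf (S ∩ Ici (x : ℝ))|) := by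
    refine ⟨1, ?_⟩
    rintro y ⟨x, rfl⟩
    exact hfam_le x
  have hδNt : ∀ x : F,
      min |(x : ℝ) - sSup (S ∩ Iic (x : ℝ))| |(x : ℝ) - sInf (S ∩ Ici (x : ℝ))| ≤ δN := by
    intro x
    rw [hδN]
    exact le_ciSup hfam_bdd x
  have hδN1 : δN ≤ 1 := by
    rw [hδN]
    exact ciSup_le hfam_le
  have hδN0 : 0 ≤ δN :=
    le_trans (le_min (abs_nonneg _) (abs_nonneg _)) (hδNt ⟨t, ht⟩)
  -- Ψ facts
  have hΨbdd : BddAbove (Set.range fun s : {s : ℝ // 1 ≤ s} => M ((s : ℝ) * δN) / (s : ℝ)) := by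
    refine ⟨M 1, ?_⟩
    rintro y ⟨⟨s, hs⟩, rfl⟩
    have hs0 : (0:ℝ) < s := lt_of_lt_of_le one_pos hs
    have h1 : M (s * δN) / s ≤ M (s * δN) :=
      div_le_self (by
        rcases le_or_gt (s * δN) 1 with h | h
        · exact hMnonneg _ (mul_nonneg hs0.le hδN0) h
        · rw [hMge _ h.le]; exact hM1nonneg) hs
    exact h1.trans (hM1 _ (mul_nonneg hs0.le hδN0))
  have hΨge : ∀ s : ℝ, (hs : 1 ≤ s) → M (s * δN) / s ≤ Ψ δN := by
    intro s hs
    rw [hΨ]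
    exact le_ciSup hΨbdd ⟨s, hs⟩
  have hΨgeM : M δN ≤ Ψ δN := by
    have := hΨge 1 le_rfl
    simpa using this
  have hΨ0 : 0 ≤ Ψ δN := le_trans (hMnonneg δN hδN0 hδN1) hΨgeM
  have hMΨ : ∀ c : ℝ, 0 < δN → δN ≤ c → c ≤ 1 → M c ≤ (c / δN) * Ψ δN := by
    intro c hδpos hδc hc1
    have hs : (1:ℝ) ≤ c / δN := (one_le_div hδpos).2 hδc
    have h := hΨge (c / δN) hs
    rw [div_mul_cancel₀ _ (ne_of_gt hδpos)] at h
    have hspos : (0:ℝ) < c / δN := lt_of_lt_of_le one_pos hs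
    calc M c ≤ Ψ δN * (c / δN) := (div_le_iff₀ hspos).1 h
      _ = (c / δN) * Ψ δN := mul_comm _ _
  -- main bound
  have key : |piecewiseLin S f t - f t| ≤ M δN + Ψ δN := by
    by_cases htS : t ∈ S
    · simp only [piecewiseLin, if_pos htS, sub_self, abs_zero]
      exact add_nonneg (hMnonneg δN hδN0 hδN1) hΨ0
    · set L := sSup (S ∩ Iic t) with hLdef
      set R := sInf (S ∩ Ici t) with hRdef
      have hL := hLmem t ht
      have hR := hRmem t ht
      have hLF : L ∈ F := hSsub hL.1
      have hRF : R ∈ F := hSsub hR.1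
      have hLt : L < t := lt_of_le_of_ne hL.2 (fun h => htS (h ▸ hL.1))
      have htR : t < R := lt_of_le_of_ne hR.2 (fun h => htS (h ▸ hR.1))
      have hL0 : (0:ℝ) ≤ L := (hFsub hLF).1
      have hR1 : R ≤ 1 := (hFsub hRF).2
      have ht0 : (0:ℝ) ≤ t := (hFsub ht).1
      have ht1 : t ≤ 1 := (hFsub ht).2
      have hDne : R - L ≠ 0 := by
        intro h; rw [sub_eq_zero] at h; linarith
      have hid : piecewiseLin S f t - f t
          = (f L - f t) * ((R - t) / (R - L)) + (f R - f t) * ((t - L) / (R - L)) := by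
        simp only [piecewiseLin, if_neg htS, ← hLdef, ← hRdef]
        field_simp
        ring
      set a := t - L with hadef
      set b := R - t with hbdef
      set D := R - L with hDdef
      have ha : 0 < a := by rw [hadef]; linarith
      have hb : 0 < b := by rw [hbdef]; linarith
      have hD : 0 < D := by rw [hDdef]; linarith
      have hab : D = a + b := by rw [hDdef, hadef, hbdef]; ring
      have ha1 : a ≤ 1 := by rw [hadef]; linarith
      have hb1 : b ≤ 1 := by rw [hbdef]; linarith
      have htri : |piecewiseLin S f t - f t|
          ≤ (b / D) * |f L - f t| + (a / D) * |f R - f t| := by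
        rw [hid]
        calc |(f L - f t) * (b / D) + (f R - f t) * (a / D)|
            ≤ |(f L - f t) * (b / D)| + |(f R - f t) * (a / D)| := abs_add_le _ _
          _ = (b / D) * |f L - f t| + (a / D) * |f R - f t| := by
              rw [abs_mul, abs_mul, abs_of_pos (div_pos hb hD), abs_of_pos (div_pos ha hD)]
              ring
      have hmin : min a b ≤ δN := by
        have := hδNt ⟨t, ht⟩
        simp only [← hLdef, ← hRdef] at this
        rwa [abs_of_pos (by linarith : (0:ℝ) < t - L),
          abs_of_neg (by linarith : t - R < 0), show -(t - R) = b by ring] at this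
      have hbD : b / D ≤ 1 := div_le_one_of_le₀ (by linarith) hD.le
      have haD : a / D ≤ 1 := div_le_one_of_le₀ (by linarith) hD.le
      have hfL : |f L - f t| ≤ M a := hmem_le a ha.le ha1 L hLF t ht
        (by rw [show L - t = -a by rw [hadef]; ring, abs_neg, abs_of_pos ha])
      have hfR : |f R - f t| ≤ M b := hmem_le b hb.le hb1 R hRF t ht
        (by rw [show R - t = b from hbdef.symm, abs_of_pos hb])
      rcases le_or_gt a δN with hcase | hcase
      · -- a ≤ δN
        have hδpos : 0 < δN := lt_of_lt_of_le ha hcase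
        have term1 : (b / D) * |f L - f t| ≤ M δN := by
          calc (b / D) * |f L - f t| ≤ 1 * M δN := by
                apply mul_le_mul hbD (hfL.trans (hMmono a δN ha.le hcase hδN1))
                  (abs_nonneg _) zero_le_one
            _ = M δN := one_mul _
        have term2 : (a / D) * |f R - f t| ≤ Ψ δN := by
          rcases le_or_gt b δN with hcb | hcb
          · have h2 : |f R - f t| ≤ Ψ δN :=
              (hfR.trans (hMmono b δN hb.le hcb hδN1)).trans hΨgeM
            calc (a / D) * |f R - f t| ≤ 1 * Ψ δN :=
                mul_le_mul haD h2 (abs_nonneg _) zero_le_one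
              _ = Ψ δN := one_mul _
          · have hMb : M b ≤ (b / δN) * Ψ δN := hMΨ b hδpos hcb.le hb1
            have hcoef : (a / D) * (b / δN) ≤ 1 := by
              rw [div_mul_div_comm, div_le_one (by positivity)]
              nlinarith [ha.le, hb.le, hcase, hδN0, hab]
            calc (a / D) * |f R - f t| ≤ (a / D) * ((b / δN) * Ψ δN) := by
                  apply mul_le_mul_of_nonneg_left (hfR.trans hMb) (by positivity)
              _ = ((a / D) * (b / δN)) * Ψ δN := by ring
              _ ≤ 1 * Ψ δN := mul_le_mul_of_nonneg_right hcoef hΨ0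
              _ = Ψ δN := one_mul _
        linarith [htri]
      · -- δN < a, hence b ≤ δN
        have hcb : b ≤ δN := by
          rcases min_cases a b with ⟨h, h'⟩ | ⟨h, h'⟩
          · linarith [hmin, h ▸ hmin]
          · rw [h] at hmin; exact hmin
        have hδpos : 0 < δN := lt_of_lt_of_le hb hcb
        have term2 : (a / D) * |f R - f t| ≤ M δN := by
          calc (a / D) * |f R - f t| ≤ 1 * M δN := by
                apply mul_le_mul haD (hfR.trans (hMmono b δN hb.le hcb hδN1))
                  (abs_nonneg _) zero_le_one
            _ = M δN := one_mul _
        have term1 : (b / D) * |f L - f t| ≤ Ψ δN := by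
          have hMa : M a ≤ (a / δN) * Ψ δN := hMΨ a hδpos hcase.le ha1
          have hcoef : (b / D) * (a / δN) ≤ 1 := by
            rw [div_mul_div_comm, div_le_one (by positivity)]
            nlinarith [ha.le, hb.le, hcb, hδN0, hab]
          calc (b / D) * |f L - f t| ≤ (b / D) * ((a / δN) * Ψ δN) := by
                apply mul_le_mul_of_nonneg_left (hfL.trans hMa) (by positivity)
            _ = ((b / D) * (a / δN)) * Ψ δN := by ring
            _ ≤ 1 * Ψ δN := mul_le_mul_of_nonneg_right hcoef hΨ0
            _ = Ψ δN := one_mul _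
        linarith [htri]
  refine ⟨key, key.trans ?_⟩
  have := hΨgeM
  linarith
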